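/- A sequence (d_1,...,d_n) of nonnegative reals is the degree sequence of an undirected graph on n vertices with nonnegative real edge weights if and only if max_i d_i ≤ (1/2)·∑_{i=1}^n d_i. -/

import Mathlib

open Finset

def Realizable (n : ℕ) (d : Fin n → ℝ) : Prop :=
  ∃ a : Matrix (Fin n) (Fin n) ℝ, (∀ i j, 0 ≤ a i j) ∧ (∀ i j, a i j = a j i) ∧
      (∀ i, a i i = 0) ∧ ∀ i, d i = ∑ j ∈ Finset.univ.erase i, a i j

lemma merge_step (n : ℕ) (hn : 3 ≤ n)
    (ih : ∀ d : Fin n → ℝ, (∀ i, 0 ≤ d i) → (∀ i, 2 * d i ≤ ∑ j, d j) → Realizable n d)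
    (e : Fin (n + 1) → ℝ) (he0 : ∀ i, 0 ≤ e i) (he : ∀ i, 2 * e i ≤ ∑ j, e j)
    (h01 : 2 * (e 0 + e 1) ≤ ∑ j, e j) : Realizable (n + 1) e := by
  have hnpos : 0 < n := by omega
  haveI : NeZero n := ⟨by omega⟩
  have hsucc0 : ((0 : Fin n).succ : Fin (n + 1)) = 1 := by
    ext; simp [Fin.val_one]
  set d' : Fin n → ℝ := fun k => if k = 0 then e 0 + e 1 else e k.succ with hd'
  have hd'sum : ∑ k, d' k = ∑ j, e j := by
    rw [← Finset.add_sum_erase _ d' (Finset.mem_univ 0)]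
    rw [Fin.sum_univ_succ e, ← Finset.add_sum_erase _ (fun k : Fin n => e k.succ)
      (Finset.mem_univ 0)]
    have : ∑ k ∈ Finset.univ.erase 0, d' k = ∑ k ∈ Finset.univ.erase 0,
        (fun k : Fin n => e k.succ) k := by
      apply Finset.sum_congr rfl
      intro k hk
      simp only [Finset.mem_erase] at hk
      simp [hd', hk.1]
    rw [this]
    simp only [hsucc0, hd', if_pos rfl]
    ring
  have hd'0 : ∀ k, 0 ≤ d' k := by
    intro k
    simp only [hd']
    split
    · have := he0 0; have := he0 1; linarith
    · exact he0 _
  have hd'c : ∀ k, 2 * d' k ≤ ∑ j, d' j := by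
    intro k
    rw [hd'sum]
    simp only [hd']
    split
    · exact h01
    · exact he _
  obtain ⟨a, ha0, has, hadiag, harow⟩ := ih d' hd'0 hd'c
  have harow' : ∀ p, ∑ k, a p k = d' p := by
    intro p
    rw [harow p, Finset.sum_erase _ (hadiag p)]
  set D : ℝ := e 0 + e 1 with hD
  set lam : ℝ := e 0 / D with hlam
  have hD0 : 0 ≤ D := by have := he0 0; have := he0 1; simp [hD]; linarith
  have hlam0 : 0 ≤ lam := div_nonneg (he0 0) hD0
  have hlam1 : lam ≤ 1 := by
    rcases eq_or_lt_of_le hD0 with h | h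
    · simp [hlam, ← h]
    · rw [hlam, div_le_one h]; have := he0 1; simp [hD]; linarith
  set A : ℕ → ℕ → ℝ := fun i j => if h : i < n ∧ j < n then a ⟨i, h.1⟩ ⟨j, h.2⟩ else 0 with hA
  have hA0 : ∀ i j, 0 ≤ A i j := by
    intro i j; simp only [hA]; split
    · exact ha0 _ _
    · exact le_refl _
  have hAs : ∀ i j, A i j = A j i := by
    intro i j; simp only [hA]
    by_cases h : i < n ∧ j < n
    · rw [dif_pos h, dif_pos (And.intro h.2 h.1), has]
    · rw [dif_neg h, dif_neg (fun h' => h ⟨h'.2, h'.1⟩)]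
  have hAv : ∀ p k : Fin n, A p.val k.val = a p k := by
    intro p k
    simp only [hA]
    rw [dif_pos ⟨p.isLt, k.isLt⟩]
  have hA00 : ∀ k : Fin n, A 0 k.val = a 0 k := by
    intro k
    have : (0 : ℕ) = (0 : Fin n).val := by simp
    rw [this, hAv]
  set b : Matrix (Fin (n + 1)) (Fin (n + 1)) ℝ := fun i j =>
    if i = j then 0
    else if i.val = 0 then (if j.val = 1 then 0 else lam * A 0 (j.val - 1))
    else if i.val = 1 then (if j.val = 0 then 0 else (1 - lam) * A 0 (j.val - 1))
    else if j.val = 0 then lam * A 0 (i.val - 1)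
    else if j.val = 1 then (1 - lam) * A 0 (i.val - 1)
    else A (i.val - 1) (j.val - 1) with hb
  refine ⟨b, ?_, ?_, ?_, ?_⟩
  · intro i j
    simp only [hb]
    split_ifs <;>
      first
        | exact le_refl _
        | exact mul_nonneg hlam0 (hA0 _ _)
        | exact mul_nonneg (by linarith) (hA0 _ _)
        | exact hA0 _ _
  · intro i j
    by_cases hij : i = j
    · simp [hij]
    · have hv : i.val ≠ j.val := fun h => hij (Fin.ext h)
      simp only [hb, if_neg hij, if_neg (Ne.symm hij)]
      split_ifs <;> first | rfl | omega | exact hAs _ _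
  · intro i; simp [hb]
  · -- row sums
    have hval1 : ((1 : Fin (n + 1)) : ℕ) = 1 := by simp [Fin.val_one] <;> omega
    have hz : ((0 : Fin n) : ℕ) = 0 := by
      simp
    have h01ne : (0 : Fin (n + 1)) ≠ 1 := by
      intro h
      have h2 := congrArg Fin.val h
      rw [hval1, Fin.val_zero] at h2
      exact absurd h2 (by omega)
    have hb01 : b 0 1 = 0 := by
      simp only [hb]
      rw [if_neg h01ne, if_pos (by simp), if_pos hval1]
    have hb10 : b 1 0 = 0 := by
      simp only [hb]
      rw [if_neg (Ne.symm h01ne), if_neg (by simp [hval1] <;> omega),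
        if_pos hval1, if_pos (by simp)]
    have hb0s : ∀ k : Fin n, k ≠ 0 → b 0 k.succ = lam * a 0 k := by
      intro k hk
      have hkv : (k : ℕ) ≠ 0 := fun h => hk (Fin.ext (h.trans hz.symm))
      simp only [hb]
      rw [if_neg (Fin.succ_ne_zero k).symm, if_pos (by simp),
        if_neg (by simp [Fin.val_succ, hz, hk] <;> omega)]
      simp [Fin.val_succ, hA00]
    have hb1s : ∀ k : Fin n, k ≠ 0 → b 1 k.succ = (1 - lam) * a 0 k := by
      intro k hk
      have hkv : (k : ℕ) ≠ 0 := fun h => hk (Fin.ext (h.trans hz.symm))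
      simp only [hb]
      rw [if_neg (by
            intro h
            have h2 := congrArg Fin.val h
            rw [hval1, Fin.val_succ] at h2
            exact hkv (by omega)),
        if_neg (by simp [hval1] <;> omega), if_pos hval1,
        if_neg (by simp [Fin.val_succ, hz, hk] <;> omega)]
      simp [Fin.val_succ, hA00]
    intro i
    rw [Finset.sum_erase _ (show b i i = 0 by simp [hb])]
    have hsplit : ∑ j, b i j = b i 0 + b i 1 + ∑ k ∈ (univ : Finset (Fin n)).erase 0,
        b i k.succ := by
      rw [Fin.sum_univ_succ (fun j => b i j),
        ← Finset.add_sum_erase _ (fun k : Fin n => b i k.succ) (Finset.mem_univ 0), hsucc0]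
      ring
    have hd'0e : d' 0 = D := by simp [hd', hD]
    by_cases hi0 : i = 0
    · subst hi0
      rw [hsplit]
      have : ∑ k ∈ (univ : Finset (Fin n)).erase 0, b 0 k.succ =
          lam * ∑ k ∈ (univ : Finset (Fin n)).erase 0, a 0 k := by
        rw [Finset.mul_sum]
        exact Finset.sum_congr rfl fun k hk => hb0s k (Finset.mem_erase.1 hk).1
      rw [this, ← harow 0, hd'0e]
      simp only [hb01]
      have hbz : b 0 0 = 0 := by simp [hb]
      rw [hbz]
      rcases eq_or_lt_of_le hD0 with h | h
      · have he00 : e 0 = 0 := by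
          have := he0 0; have := he0 1
          simp only [hD] at h; linarith
        simp [hlam, he00]
      · rw [hlam, div_mul_cancel₀ _ (ne_of_gt h)]
        ring
    · by_cases hi1 : i = 1
      · subst hi1
        rw [hsplit]
        have : ∑ k ∈ (univ : Finset (Fin n)).erase 0, b 1 k.succ =
            (1 - lam) * ∑ k ∈ (univ : Finset (Fin n)).erase 0, a 0 k := by
          rw [Finset.mul_sum]
          exact Finset.sum_congr rfl fun k hk => hb1s k (Finset.mem_erase.1 hk).1
        rw [this, ← harow 0, hd'0e]
        have hbz : b 1 1 = 0 := by simp [hb]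
        rw [hb10, hbz]
        rcases eq_or_lt_of_le hD0 with h | h
        · have he10 : e 1 = 0 := by
            have := he0 0; have := he0 1
            simp only [hD] at h; linarith
          rw [he10, ← h]; ring
        · rw [hlam]
          field_simp
          ring
      · -- i.val ≥ 2
        have hiv : 2 ≤ (i : ℕ) := by
          rcases Nat.lt_or_ge (i : ℕ) 2 with h | h
          · interval_cases h' : (i : ℕ)
            · exact absurd (Fin.ext h') hi0
            · exact absurd (Fin.ext (h'.trans hval1.symm)) hi1
          · exact h
        set p : Fin n := ⟨(i : ℕ) - 1, by omega⟩ with hp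
        have hpsucc : p.succ = i := by
          ext; simp [Fin.val_succ, hp]; omega
        have hpne : p ≠ 0 := by
          simp [hp, Fin.ext_iff]; omega
        have hbi0 : b i 0 = lam * a 0 p := by
          simp only [hb]
          rw [if_neg hi0, if_neg (by omega),
            if_neg (by omega), if_pos (by simp)]
          have : A 0 ((i : ℕ) - 1) = A 0 p.val := by simp [hp]
          rw [this, hA00]
        have hbi1 : b i 1 = (1 - lam) * a 0 p := by
          simp only [hb]
          rw [if_neg hi1, if_neg (by omega),
            if_neg (by omega), if_neg (by rw [hval1]; omega), if_pos hval1]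
          have : A 0 ((i : ℕ) - 1) = A 0 p.val := by simp [hp]
          rw [this, hA00]
        have hbis : ∀ k : Fin n, k ≠ 0 → b i k.succ = a p k := by
          intro k hk
          have hkv : (k : ℕ) ≠ 0 := fun h => hk (Fin.ext (h.trans hz.symm))
          by_cases hik : k.succ = i
          · rw [hik]
            have hkp : k = p := by
              apply Fin.ext
              have h2 : (k : ℕ) + 1 = (i : ℕ) := by
                have := congrArg Fin.val hik
                simpa [Fin.val_succ] using this
              simp only [hp]
              omega
            rw [hkp] at *
            simp [hb, hadiag]
          · simp only [hb]
            rw [if_neg (fun h => hik h.symm), if_neg (by omega), if_neg (by omega),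
              if_neg (by simp [Fin.val_succ] <;> omega),
              if_neg (by simp [Fin.val_succ, hval1] <;> omega)]
            have : A ((i : ℕ) - 1) ((k.succ : ℕ) - 1) = A p.val k.val := by
              simp [hp, Fin.val_succ]
            rw [this, hAv]
        rw [hsplit, hbi0, hbi1]
        have : ∑ k ∈ (univ : Finset (Fin n)).erase 0, b i k.succ =
            ∑ k ∈ (univ : Finset (Fin n)).erase 0, a p k :=
          Finset.sum_congr rfl fun k hk => hbis k (Finset.mem_erase.1 hk).1
        rw [this, Finset.sum_erase_eq_sub (Finset.mem_univ 0), harow' p]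
        have hdp : d' p = e i := by
          rw [hd']
          simp only [if_neg hpne, hpsucc]
        rw [hdp, has p 0]
        ring

lemma base3' (d : Fin 3 → ℝ) (hd : ∀ i, 0 ≤ d i) (h : ∀ i, 2 * d i ≤ ∑ j, d j) :
    Realizable 3 d := by
  set S : ℝ := ∑ j, d j with hS
  have hS3 : S = d 0 + d 1 + d 2 := by rw [hS, Fin.sum_univ_three]
  refine ⟨fun i j => if i = j then 0 else S / 2 - d (-(i + j)), ?_, ?_, ?_, ?_⟩
  · intro i j
    dsimp only
    split
    · exact le_refl _
    · have := h (-(i + j)); linarith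
  · intro i j
    simp [add_comm i j, eq_comm]
  · intro i; simp
  · intro i
    rw [Finset.sum_erase _ (by simp)]
    have e1 : (-1 : Fin 3) = 2 := by decide
    have e2 : (-2 : Fin 3) = 1 := by decide
    have e3 : (-3 : Fin 3) = 0 := by decide
    fin_cases i <;> simp [Fin.sum_univ_three, e1, e2, e3] <;> linarith [hS3]

lemma perm_real' {n : ℕ} (d : Fin n → ℝ) (σ : Equiv.Perm (Fin n))
    (h : Realizable n (d ∘ σ)) : Realizable n d := by
  obtain ⟨a, h0, hs, hdiag, hrow⟩ := h
  refine ⟨fun i j => a (σ.symm i) (σ.symm j), fun i j => h0 _ _, fun i j => hs _ _,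
    fun i => hdiag _, fun i => ?_⟩
  have := hrow (σ.symm i)
  simp only [Function.comp_apply, Equiv.apply_symm_apply] at this
  rw [this]
  refine Finset.sum_nbij' (fun j => σ j) (fun j => σ.symm j) ?_ ?_ ?_ ?_ ?_ <;>
    simp [Equiv.eq_symm_apply, Fin.ext_iff]

lemma main_suff : ∀ n, 3 ≤ n → ∀ d : Fin n → ℝ, (∀ i, 0 ≤ d i) →
    (∀ i, 2 * d i ≤ ∑ j, d j) → Realizable n d := by
  intro n hn
  induction n, hn using Nat.le_induction with
  | base => exact base3'
  | succ n hn ih =>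
    intro d hd hcond
    -- four distinct indices
    have h4 : 4 ≤ n + 1 := by omega
    set v0 : Fin (n + 1) := ⟨0, by omega⟩
    set v1 : Fin (n + 1) := ⟨1, by omega⟩
    set v2 : Fin (n + 1) := ⟨2, by omega⟩
    set v3 : Fin (n + 1) := ⟨3, by omega⟩
    have hsum4 : d v0 + d v1 + d v2 + d v3 ≤ ∑ j, d j := by
      have hsub : ({v0, v1, v2, v3} : Finset (Fin (n + 1))) ⊆ Finset.univ :=
        Finset.subset_univ _
      have := Finset.sum_le_sum_of_subset_of_nonneg hsub (fun i _ _ => hd i)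
      have hs4 : ∑ j ∈ ({v0, v1, v2, v3} : Finset (Fin (n + 1))), d j
          = d v0 + d v1 + d v2 + d v3 := by
        rw [Finset.sum_insert (by simp [Fin.ext_iff]),
          Finset.sum_insert (by simp [Fin.ext_iff, v1, v2, v3]),
          Finset.sum_insert (by simp [Fin.ext_iff, v2, v3]), Finset.sum_singleton]
        ring
      linarith [this, hs4.ge]
    obtain ⟨i₀, i₁, hne, hle⟩ : ∃ i₀ i₁ : Fin (n + 1), i₀ ≠ i₁ ∧
        2 * (d i₀ + d i₁) ≤ ∑ j, d j := by
      by_cases hc : d v0 + d v1 ≤ d v2 + d v3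
      · exact ⟨v0, v1, by simp [Fin.ext_iff], by linarith⟩
      · exact ⟨v2, v3, by simp [Fin.ext_iff, v2, v3], by linarith⟩
    -- permutation sending 0 ↦ i₀, 1 ↦ i₁
    set τ : Equiv.Perm (Fin (n + 1)) := Equiv.swap 0 i₀ with hτ
    set j : Fin (n + 1) := τ i₁ with hj
    have hne01 : (0 : Fin (n + 1)) ≠ 1 := by
      intro h
      have := congrArg Fin.val h
      simp [Fin.val_one] at this
      omega
    have hjne : j ≠ 0 := by
      intro h
      have : τ j = τ 0 := by rw [h]
      rw [hj, Equiv.swap_apply_self, hτ] at this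
      rw [Equiv.swap_apply_left] at this
      exact hne this.symm
    set σ : Equiv.Perm (Fin (n + 1)) := (Equiv.swap 1 j).trans τ with hσ
    have hσ0 : σ 0 = i₀ := by
      rw [hσ]
      simp only [Equiv.trans_apply]
      rw [Equiv.swap_apply_of_ne_of_ne hne01 (fun h => hjne h.symm), hτ,
        Equiv.swap_apply_left]
    have hσ1 : σ 1 = i₁ := by
      rw [hσ]
      simp only [Equiv.trans_apply]
      rw [Equiv.swap_apply_left, hj, hτ, Equiv.swap_apply_self]
    apply perm_real' d σ
    have hsumc : ∑ i, (d ∘ σ) i = ∑ j, d j := Equiv.sum_comp σ d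
    apply merge_step n hn ih (d ∘ σ) (fun i => hd _)
    · intro i; rw [hsumc]; exact hcond _
    · rw [hsumc]
      simp only [Function.comp_apply, hσ0, hσ1]
      exact hle

theorem continuous_graphical_iff (n : ℕ) (hn : 3 ≤ n) (d : Fin n → ℝ) (hd : ∀ i, 0 ≤ d i) :
    (∃ a : Matrix (Fin n) (Fin n) ℝ, (∀ i j, 0 ≤ a i j) ∧ (∀ i j, a i j = a j i) ∧
      (∀ i, a i i = 0) ∧ ∀ i, d i = ∑ j ∈ Finset.univ.erase i, a i j) ↔
    (∀ i, d i ≤ (1 / 2) * ∑ j, d j) := by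
  constructor
  · rintro ⟨a, h0, hs, hdiag, hrow⟩ i
    have key : d i ≤ ∑ j ∈ Finset.univ.erase i, d j := by
      rw [hrow i]
      apply Finset.sum_le_sum
      intro j hj
      have hji : i ∈ (Finset.univ : Finset (Fin n)).erase j := by
        simp only [Finset.mem_erase] at hj ⊢
        exact ⟨Ne.symm hj.1, Finset.mem_univ _⟩
      calc a i j = a j i := hs i j
        _ ≤ ∑ k ∈ Finset.univ.erase j, a j k :=
            Finset.single_le_sum (fun k _ => h0 j k) hji
        _ = d j := (hrow j).symm
    have : ∑ j ∈ Finset.univ.erase i, d j = (∑ j, d j) - d i :=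
      Finset.sum_erase_eq_sub (Finset.mem_univ i)
    linarith
  · intro h
    have := main_suff n hn d hd (fun i => by have := h i; linarith)
    exact this
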